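/- Let G be the unit disk graph on a finite point set with independence number at most 2, let u, v be non-adjacent vertices with all of V(G) on one side of the line through u and v. Then N(u) is the union of two cliques and N(v) \ N(u) is a clique. -/

import Mathlib

set_option maxHeartbeats 1000000

theorem key_wlog (d x1 p y1 q : ℝ) (hd : 1 ≤ d) (hq : 0 ≤ q) (hpq : q ≤ p)
    (hx1 : x1^2+p^2 ≤ 1) (hx2 : (x1-d)^2+p^2 ≤ 1)
    (hy1 : y1^2+q^2 ≤ 1) (hy2 : (y1-d)^2+q^2 ≤ 1) :
    (x1-y1)^2+(p-q)^2 ≤ 1 := by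
  set s := Real.sqrt (1-p^2) with hs
  set t := Real.sqrt (1-q^2) with ht
  have hp0 : 0 ≤ p := le_trans hq hpq
  have hs2 : s^2 = 1-p^2 := Real.sq_sqrt (by nlinarith)
  have ht2 : t^2 = 1-q^2 := Real.sq_sqrt (by nlinarith)
  have hs0 : 0 ≤ s := Real.sqrt_nonneg _
  have ht0 : 0 ≤ t := Real.sqrt_nonneg _
  have hst : s ≤ t := Real.sqrt_le_sqrt (by nlinarith)
  have ht1 : t ≤ 1 := by nlinarith
  have sqle : ∀ z c : ℝ, 0 ≤ c → z^2 ≤ c^2 → z ≤ c := by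
    intro z c hc h; nlinarith
  have hx1s : x1 ≤ s := sqle x1 s hs0 (by nlinarith)
  have hx2s : d - s ≤ x1 := by
    have := sqle (d - x1) s hs0 (by nlinarith); linarith
  have hy1t : y1 ≤ t := sqle y1 t ht0 (by nlinarith)
  have hy2t : d - t ≤ y1 := by
    have := sqle (d - y1) t ht0 (by nlinarith); linarith
  have hsd : d ≤ 2*s := by linarith
  have habs : (x1-y1)^2 ≤ (s+t-d)^2 := by
    have h1 : x1 - y1 ≤ s + t - d := by linarith
    have h2 : -(s+t-d) ≤ x1 - y1 := by linarith
    nlinarith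
  have hkey : (s+t-d)^2 ≤ 1 - t^2 + s^2 := by
    nlinarith [mul_nonneg (sub_nonneg.2 hd) (by linarith : (0:ℝ) ≤ 2*s - d + 1),
      mul_nonneg (by linarith : (0:ℝ) ≤ 1 - t) (by linarith : (0:ℝ) ≤ s + t - d)]
  nlinarith [mul_nonneg (sub_nonneg.2 hpq) hq]

theorem key_lem (d x1 p y1 q : ℝ) (hd : 1 ≤ d) (hp : 0 ≤ p) (hq : 0 ≤ q)
    (hx1 : x1^2+p^2 ≤ 1) (hx2 : (x1-d)^2+p^2 ≤ 1)
    (hy1 : y1^2+q^2 ≤ 1) (hy2 : (y1-d)^2+q^2 ≤ 1) :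
    (x1-y1)^2+(p-q)^2 ≤ 1 := by
  rcases le_total q p with h | h
  · exact key_wlog d x1 p y1 q hd hq h hx1 hx2 hy1 hy2
  · have := key_wlog d y1 q x1 p hd hp h hy1 hy2 hx1 hx2
    have e : (x1-y1)^2+(p-q)^2 = (y1-x1)^2+(q-p)^2 := by ring
    rw [e]; exact this

theorem key_hom (D Ax Bx Ay By : ℝ) (hD : 1 < D)
    (hx1 : Ax^2+Bx^2 ≤ D) (hx2 : (Ax-D)^2+Bx^2 ≤ D)
    (hy1 : Ay^2+By^2 ≤ D) (hy2 : (Ay-D)^2+By^2 ≤ D)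
    (hB : 0 ≤ Bx * By) :
    (Ax-Ay)^2+(Bx-By)^2 ≤ D := by
  set d := Real.sqrt D with hdd
  have hD0 : 0 < D := by linarith
  have hd2 : d^2 = D := Real.sq_sqrt hD0.le
  have hd0 : 0 < d := Real.sqrt_pos.2 hD0
  have hd1 : 1 ≤ d := by nlinarith
  have hDd : D/d = d := by rw [div_eq_iff hd0.ne']; nlinarith
  have hdiv : ∀ a b : ℝ, a^2 + b^2 ≤ D ↔ (a/d)^2+(b/d)^2 ≤ 1 := by
    intro a b
    rw [div_pow, div_pow, ← add_div, hd2, div_le_one hD0]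
  have habs : (|Bx| - |By|)^2 = (Bx - By)^2 := by
    have h : |Bx| * |By| = Bx * By := by
      rw [← abs_mul]; exact abs_of_nonneg hB
    nlinarith [sq_abs Bx, sq_abs By]
  have hsub : ∀ a : ℝ, (a - D)/d = a/d - d := by
    intro a; rw [sub_div, hDd]
  have hk := key_lem d (Ax/d) (|Bx|/d) (Ay/d) (|By|/d) hd1
    (by positivity) (by positivity)
    ((hdiv Ax |Bx|).1 (by rw [sq_abs]; exact hx1))
    (by rw [← hsub Ax]; exact (hdiv (Ax-D) |Bx|).1 (by rw [sq_abs]; exact hx2))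
    ((hdiv Ay |By|).1 (by rw [sq_abs]; exact hy1))
    (by rw [← hsub Ay]; exact (hdiv (Ay-D) |By|).1 (by rw [sq_abs]; exact hy2))
  rw [div_sub_div_same, div_sub_div_same] at hk
  have := (hdiv (Ax-Ay) (|Bx|-|By|)).2 hk
  rw [habs] at this
  exact this

theorem planar (u0 u1 v0 v1 x0 x1 y0 y1 : ℝ)
    (hd : 1 < (v0-u0)^2+(v1-u1)^2)
    (hxu : (x0-u0)^2+(x1-u1)^2 ≤ 1) (hxv : (x0-v0)^2+(x1-v1)^2 ≤ 1)
    (hyu : (y0-u0)^2+(y1-u1)^2 ≤ 1) (hyv : (y0-v0)^2+(y1-v1)^2 ≤ 1)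
    (hB : 0 ≤ ((x0-u0)*(v1-u1)-(x1-u1)*(v0-u0)) * ((y0-u0)*(v1-u1)-(y1-u1)*(v0-u0))) :
    (x0-y0)^2+(x1-y1)^2 ≤ 1 := by
  set e0 := v0 - u0 with he0
  set e1 := v1 - u1 with he1
  set D := e0^2 + e1^2 with hD
  have hD1 : 1 < D := hd
  have hD0 : 0 < D := by linarith
  set Ax := (x0-u0)*e0 + (x1-u1)*e1 with hAx
  set Bx := (x0-u0)*e1 - (x1-u1)*e0 with hBx
  set Ay := (y0-u0)*e0 + (y1-u1)*e1 with hAy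
  set By := (y0-u0)*e1 - (y1-u1)*e0 with hBy
  have hle : ∀ a : ℝ, a ≤ 1 → a * D ≤ D := fun a ha => by
    calc a * D ≤ 1 * D := mul_le_mul_of_nonneg_right ha hD0.le
    _ = D := one_mul D
  have lagxv : (Ax - D)^2 + Bx^2 = ((x0-v0)^2+(x1-v1)^2) * D := by
    rw [hAx, hBx, hD, he0, he1]; ring
  have lagyv : (Ay - D)^2 + By^2 = ((y0-v0)^2+(y1-v1)^2) * D := by
    rw [hAy, hBy, hD, he0, he1]; ring
  have lagxy : (Ax - Ay)^2 + (Bx - By)^2 = ((x0-y0)^2+(x1-y1)^2) * D := by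
    rw [hAx, hBx, hAy, hBy, hD]; ring
  have hk := key_hom D Ax Bx Ay By hD1
    (by rw [show Ax^2 + Bx^2 = ((x0-u0)^2+(x1-u1)^2) * D by rw [hAx, hBx, hD]; ring]
        exact hle _ hxu)
    (by rw [lagxv]; exact hle _ hxv)
    (by rw [show Ay^2 + By^2 = ((y0-u0)^2+(y1-u1)^2) * D by rw [hAy, hBy, hD]; ring]
        exact hle _ hyu)
    (by rw [lagyv]; exact hle _ hyv) hB
  rw [lagxy] at hk
  nth_rewrite 2 [← one_mul D] at hk
  exact le_of_mul_le_mul_right hk hD0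

lemma dist_le_one_iff' (x y : EuclideanSpace ℝ (Fin 2)) :
    dist x y ≤ 1 ↔ (x 0 - y 0)^2 + (x 1 - y 1)^2 ≤ 1 := by
  have h : dist x y = Real.sqrt ((x 0 - y 0)^2 + (x 1 - y 1)^2) := by
    rw [EuclideanSpace.dist_eq, Fin.sum_univ_two]
    simp [Real.dist_eq, sq_abs]
  rw [h, ← Real.sqrt_one, Real.sqrt_le_sqrt_iff (by positivity), Real.sqrt_one]

lemma one_lt_dist_iff' (x y : EuclideanSpace ℝ (Fin 2)) :
    1 < dist x y ↔ 1 < (x 0 - y 0)^2 + (x 1 - y 1)^2 := by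
  rw [← not_le, ← not_le, dist_le_one_iff']

theorem stmt_12 (V : Finset (EuclideanSpace ℝ (Fin 2)))
    (hα : ∀ a ∈ V, ∀ b ∈ V, ∀ c ∈ V, a ≠ b → a ≠ c → b ≠ c →
      dist a b ≤ 1 ∨ dist a c ≤ 1 ∨ dist b c ≤ 1)
    (u v : EuclideanSpace ℝ (Fin 2)) (hu : u ∈ V) (hv : v ∈ V)
    (huv : 1 < dist u v)
    (f : EuclideanSpace ℝ (Fin 2) →ₗ[ℝ] ℝ) (hf : f ≠ 0)
    (hfu : f u = f v) (hside : ∀ w ∈ V, f w ≤ f u) :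
    (∃ A B : Set (EuclideanSpace ℝ (Fin 2)),
      {w | w ∈ V ∧ w ≠ u ∧ dist w u ≤ 1} = A ∪ B ∧
      (∀ x ∈ A, ∀ y ∈ A, dist x y ≤ 1) ∧ (∀ x ∈ B, ∀ y ∈ B, dist x y ≤ 1)) ∧
    (∀ x ∈ {w | w ∈ V ∧ w ≠ v ∧ dist w v ≤ 1} \ {w | w ∈ V ∧ w ≠ u ∧ dist w u ≤ 1},
     ∀ y ∈ {w | w ∈ V ∧ w ≠ v ∧ dist w v ≤ 1} \ {w | w ∈ V ∧ w ≠ u ∧ dist w u ≤ 1},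
      dist x y ≤ 1) := by
  -- coordinates of f
  set c0 := f (EuclideanSpace.single 0 (1:ℝ)) with hc0
  set c1 := f (EuclideanSpace.single 1 (1:ℝ)) with hc1
  have hplus : ∀ w : EuclideanSpace ℝ (Fin 2), f w = w 0 * c0 + w 1 * c1 := by
    intro w
    have hw : w = w 0 • EuclideanSpace.single 0 (1:ℝ) + w 1 • EuclideanSpace.single 1 (1:ℝ) := by
      ext i
      fin_cases i <;>
        simp [EuclideanSpace.single_apply]
    calc f w = f (w 0 • EuclideanSpace.single 0 (1:ℝ) + w 1 • EuclideanSpace.single 1 (1:ℝ)) := by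
          rw [← hw]
      _ = w 0 * c0 + w 1 * c1 := by
          rw [map_add, map_smul, map_smul, smul_eq_mul, smul_eq_mul]
  have hcc : ¬(c0 = 0 ∧ c1 = 0) := by
    rintro ⟨h0, h1⟩
    apply hf
    apply LinearMap.ext
    intro w
    rw [hplus w, h0, h1]
    simp
  set e0 := v 0 - u 0 with he0
  set e1 := v 1 - u 1 with he1
  have hD : 1 < e0^2 + e1^2 := by
    have := (one_lt_dist_iff' v u).1 (by rwa [dist_comm])
    rwa [he0, he1]
  have hrel : e0 * c0 + e1 * c1 = 0 := by
    have h1 := hplus u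
    have h2 := hplus v
    rw [he0, he1]
    linear_combination h1 - h2 - hfu
  -- extract lambda
  obtain ⟨l, h0, h1⟩ : ∃ l : ℝ, c0 = l * e1 ∧ c1 = -(l * e0) := by
    by_cases he : e0 = 0
    · have he1' : e1 ≠ 0 := by
        intro h; rw [he, h] at hD; norm_num at hD
      have hc1' : c1 = 0 := by
        have : e1 * c1 = 0 := by rw [he] at hrel; linarith
        exact (mul_eq_zero.1 this).resolve_left he1'
      exact ⟨c0 / e1, by field_simp, by rw [hc1', he]; ring⟩
    · refine ⟨-c1 / e0, ?_, by field_simp⟩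
      rw [div_mul_eq_mul_div, eq_div_iff he]
      linear_combination hrel
  have hl : l ≠ 0 := by
    intro h
    exact hcc ⟨by rw [h0, h]; ring, by rw [h1, h]; ring⟩
  -- all points of V on one side: cross products nonneg pairwise
  have hsign : ∀ w ∈ V, l * ((w 0 - u 0) * e1 - (w 1 - u 1) * e0) ≤ 0 := by
    intro w hw
    have heq : l * ((w 0 - u 0) * e1 - (w 1 - u 1) * e0) = f w - f u := by
      rw [hplus w, hplus u, h0, h1, he0, he1]; ring
    rw [heq]
    linarith [hside w hw]
  have hB : ∀ x ∈ V, ∀ y ∈ V,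
      0 ≤ ((x 0 - u 0) * e1 - (x 1 - u 1) * e0) * ((y 0 - u 0) * e1 - (y 1 - u 1) * e0) := by
    intro x hx y hy
    set Bx := (x 0 - u 0) * e1 - (x 1 - u 1) * e0
    set By := (y 0 - u 0) * e1 - (y 1 - u 1) * e0
    have h2 : 0 ≤ (-(l * Bx)) * (-(l * By)) :=
      mul_nonneg (neg_nonneg.2 (hsign x hx)) (neg_nonneg.2 (hsign y hy))
    have h3 : (-(l * Bx)) * (-(l * By)) = l^2 * (Bx * By) := by ring
    have h4 : 0 < l^2 := by positivity
    by_contra h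
    push_neg at h
    nlinarith
  constructor
  · -- N(u) is union of two cliques
    refine ⟨{w | w ∈ V ∧ w ≠ u ∧ dist w u ≤ 1 ∧ dist w v ≤ 1},
      {w | w ∈ V ∧ w ≠ u ∧ dist w u ≤ 1 ∧ 1 < dist w v}, ?_, ?_, ?_⟩
    · ext w
      simp only [Set.mem_setOf_eq, Set.mem_union]
      constructor
      · rintro ⟨hw1, hw2, hw3⟩
        rcases le_or_gt (dist w v) 1 with h | h
        · exact Or.inl ⟨hw1, hw2, hw3, h⟩
        · exact Or.inr ⟨hw1, hw2, hw3, h⟩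
      · rintro (⟨hw1, hw2, hw3, _⟩ | ⟨hw1, hw2, hw3, _⟩) <;> exact ⟨hw1, hw2, hw3⟩
    · -- clique A : adjacent to both u and v
      rintro x ⟨hxV, -, hxu, hxv⟩ y ⟨hyV, -, hyu, hyv⟩
      rw [dist_le_one_iff']
      apply planar (u 0) (u 1) (v 0) (v 1) (x 0) (x 1) (y 0) (y 1)
      · rwa [← he0, ← he1]
      · exact (dist_le_one_iff' x u).1 hxu
      · exact (dist_le_one_iff' x v).1 hxv
      · exact (dist_le_one_iff' y u).1 hyu
      · exact (dist_le_one_iff' y v).1 hyv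
      · have := hB x hxV y hyV
        rwa [← he0, ← he1]
    · -- clique B : adjacent to u, not to v
      rintro x ⟨hxV, -, -, hxv⟩ y ⟨hyV, -, -, hyv⟩
      by_cases hxy : x = y
      · subst hxy; simp
      have hxv' : x ≠ v := by
        intro h; rw [h, dist_self] at hxv; norm_num at hxv
      have hyv' : y ≠ v := by
        intro h; rw [h, dist_self] at hyv; norm_num at hyv
      rcases hα x hxV y hyV v hv hxy hxv' hyv' with h | h | h
      · exact h
      · exact absurd h (not_le.2 hxv)
      · exact absurd h (not_le.2 hyv)
  · -- N(v) \ N(u) is a clique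
    intro x hx y hy
    simp only [Set.mem_diff, Set.mem_setOf_eq] at hx hy
    obtain ⟨⟨hxV, hxv, hxvd⟩, hxn⟩ := hx
    obtain ⟨⟨hyV, hyv, hyvd⟩, hyn⟩ := hy
    have hxu : x ≠ u := by
      intro h; rw [h] at hxvd; exact absurd hxvd (not_le.2 huv)
    have hyu : y ≠ u := by
      intro h; rw [h] at hyvd; exact absurd hyvd (not_le.2 huv)
    have hxud : ¬ dist x u ≤ 1 := fun h => hxn ⟨hxV, hxu, h⟩
    have hyud : ¬ dist y u ≤ 1 := fun h => hyn ⟨hyV, hyu, h⟩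
    by_cases hxy : x = y
    · subst hxy; simp
    rcases hα x hxV y hyV u hu hxy hxu hyu with h | h | h
    · exact h
    · exact absurd h hxud
    · exact absurd h hyud
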